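/- arXiv:2205.08490 — 5 statements merged into one kernel-verified Lean document; each statement's English description precedes it below -/
import Mathlib

section
/- Let D be a domain in ℂ and let h be a non-constant meromorphic function on D such that {h, z} is holomorphic on D. Then h′ is non-vanishing at every point of D at which h is holomorphic. -/
noncomputable section

open Complex

/-- The Schwarzian derivative `{h, z} = (h''/h')' - (1/2) (h''/h')²`. -/
def schwarzian (h : ℂ → ℂ) (z : ℂ) : ℂ :=
  deriv (fun w => deriv (deriv h) w / deriv h w) z -
    (1 / 2) * (deriv (deriv h) z / deriv h z) ^ 2

/-- `h` is non-constant on `D` (i.e. not constant on its regular points in `D`). -/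
def NonconstOn (h : ℂ → ℂ) (D : Set ℂ) : Prop :=
  ¬ ∃ c : ℂ, ∀ z ∈ D, AnalyticAt ℂ h z → h z = c

open Filter Topology in
lemma my_analyticAt_deriv {f : ℂ → ℂ} {x : ℂ} (hf : AnalyticAt ℂ f x) :
    AnalyticAt ℂ (deriv f) x := by
  obtain ⟨s, hs, hso, hxs⟩ := eventually_nhds_iff.mp hf.eventually_analyticAt
  exact (AnalyticOnNhd.deriv (fun z hz => hs z hz)) x hxs

open Filter Topology in
/-- Identity-type propagation: if a meromorphic function on a connected open set is
eventually equal to a constant near one point, then it equals that constant at all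
its analytic points. -/
lemma my_const_propagation (D : Set ℂ) (hD : IsOpen D) (hDconn : IsConnected D)
    (h : ℂ → ℂ) (hmer : MeromorphicOn h D) {z₀ : ℂ} (hz₀ : z₀ ∈ D) {c : ℂ}
    (hloc : ∀ᶠ z in 𝓝[≠] z₀, h z = c) :
    ∀ z ∈ D, AnalyticAt ℂ h z → h z = c := by
  have open_aux : ∀ (P : ℂ → Prop), IsOpen {x : ℂ | ∀ᶠ z in 𝓝[≠] x, P z} := by
    intro P
    rw [isOpen_iff_mem_nhds]
    intro x hx
    rw [Set.mem_setOf_eq, eventually_nhdsWithin_iff] at hx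
    filter_upwards [hx.eventually_nhds] with y hy
    show ∀ᶠ z in 𝓝[≠] y, P z
    rw [eventually_nhdsWithin_iff]
    by_cases hyx : y = x
    · exact hyx ▸ hx
    · filter_upwards [hy, eventually_ne_nhds hyx] with z hz hzx _
      exact hz (Set.mem_compl_singleton_iff.mpr hzx)
  set u : Set ℂ := {x : ℂ | ∀ᶠ z in 𝓝[≠] x, h z - c = 0} with hu_def
  set v : Set ℂ := {x : ℂ | ∀ᶠ z in 𝓝[≠] x, h z - c ≠ 0} with hv_def
  have hdisj : Disjoint u v := by
    rw [Set.disjoint_left]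
    intro x hxu hxv
    have hxu' : ∀ᶠ z in 𝓝[≠] x, h z - c = 0 := hxu
    have hxv' : ∀ᶠ z in 𝓝[≠] x, h z - c ≠ 0 := hxv
    obtain ⟨z, h1, h2⟩ := (hxu'.and hxv').exists
    exact h2 h1
  have hsub : D ⊆ u ∪ v := by
    intro x hx
    have hm : MeromorphicAt (fun z => h z - c) x :=
      (hmer x hx).sub (MeromorphicAt.const c x)
    by_cases ho : meromorphicOrderAt (fun z => h z - c) x = ⊤
    · exact Or.inl (meromorphicOrderAt_eq_top_iff.mp ho)
    · right
      obtain ⟨n, hn⟩ := WithTop.ne_top_iff_exists.mp ho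
      obtain ⟨γ, hγ, hγ0, hev⟩ := (meromorphicOrderAt_eq_int_iff hm).mp hn.symm
      filter_upwards [hev,
        (hγ.continuousAt.eventually_ne hγ0).filter_mono nhdsWithin_le_nhds,
        eventually_mem_nhdsWithin] with z h1 h2 h3
      rw [h1, smul_eq_mul]
      exact mul_ne_zero (zpow_ne_zero n
        (sub_ne_zero.mpr (Set.mem_compl_singleton_iff.mp h3))) h2
  have hz₀u : z₀ ∈ u := by
    show ∀ᶠ z in 𝓝[≠] z₀, h z - c = 0
    filter_upwards [hloc] with z hz
    rw [hz, sub_self]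
  have hDu : D ⊆ u := hDconn.isPreconnected.subset_left_of_subset_union
    (open_aux _) (open_aux _) hdisj hsub ⟨z₀, hz₀, hz₀u⟩
  intro z hz hA
  have h1 : Filter.Tendsto h (𝓝[≠] z) (𝓝 (h z)) :=
    hA.continuousAt.continuousWithinAt
  have h2 : Filter.Tendsto h (𝓝[≠] z) (𝓝 c) := by
    apply Filter.Tendsto.congr' _ (tendsto_const_nhds (α := ℂ) (x := c))
    filter_upwards [hDu hz] with w hw
    exact (sub_eq_zero.mp hw).symm
  exact tendsto_nhds_unique h1 h2

open Filter Topology in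
/-- If `h'` has a zero of finite positive order at `z₀`, then the Schwarzian of `h`
has a genuine double pole at `z₀`, so it cannot agree with a continuous `g` on a
punctured neighborhood. -/
lemma my_schwarzian_pole {h g : ℂ → ℂ} {z₀ : ℂ} {m : ℕ} (hm : 1 ≤ m)
    {u : ℂ → ℂ} (hu : AnalyticAt ℂ u z₀) (hu0 : u z₀ ≠ 0)
    (hev : ∀ᶠ z in 𝓝 z₀, deriv h z = (z - z₀) ^ m * u z)
    (hgc : ContinuousAt g z₀)
    (hge : ∀ᶠ z in 𝓝[≠] z₀, g z = schwarzian h z) : False := by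
  obtain ⟨U, hU, hUo, hz₀U⟩ := eventually_nhds_iff.mp
    (hev.and (hu.eventually_analyticAt.and (hu.continuousAt.eventually_ne hu0)))
  set q : ℂ → ℂ := fun z => deriv u z / u z with hq_def
  have hqa : ∀ z ∈ U, AnalyticAt ℂ q z := fun z hz =>
    (my_analyticAt_deriv (hU z hz).2.1).div (hU z hz).2.1 (hU z hz).2.2
  -- second derivative on U
  have hd2 : ∀ z ∈ U, deriv (deriv h) z
      = (m : ℂ) * (z - z₀) ^ (m - 1) * u z + (z - z₀) ^ m * deriv u z := by
    intro z hz
    have hEq : deriv h =ᶠ[𝓝 z] (fun w => (w - z₀) ^ m * u w) := by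
      filter_upwards [hUo.eventually_mem hz] with w hw
      exact (hU w hw).1
    rw [hEq.deriv_eq]
    have h1 : HasDerivAt (fun w => (w - z₀) ^ m)
        ((m : ℂ) * (z - z₀) ^ (m - 1) * 1) z :=
      ((hasDerivAt_id z).sub_const z₀).pow m
    have h2 : HasDerivAt u (deriv u z) z :=
      ((hU z hz).2.1.differentiableAt).hasDerivAt
    rw [HasDerivAt.deriv (f := fun w => (w - z₀) ^ m * u w) (h1.mul h2)]
    ring
  -- logarithmic derivative of h' on U \ {z₀}
  have hF : ∀ z ∈ U, z ≠ z₀ →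
      deriv (deriv h) z / deriv h z = (m : ℂ) * (z - z₀)⁻¹ + q z := by
    intro z hz hzz
    have hb : z - z₀ ≠ 0 := sub_ne_zero.mpr hzz
    have hbp : (z - z₀) ^ (m - 1) ≠ 0 := pow_ne_zero _ hb
    have huz : u z ≠ 0 := (hU z hz).2.2
    have hpm : (z - z₀) ^ m = (z - z₀) ^ (m - 1) * (z - z₀) := by
      rw [← pow_succ, Nat.sub_add_cancel hm]
    rw [hd2 z hz, (hU z hz).1, hpm, hq_def]
    field_simp
  -- derivative of the logarithmic derivative on U \ {z₀}
  have hdF : ∀ z ∈ U, z ≠ z₀ →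
      deriv (fun w => deriv (deriv h) w / deriv h w) z
        = (m : ℂ) * (-1 / (z - z₀) ^ 2) + deriv q z := by
    intro z hz hzz
    have hEq : (fun w => deriv (deriv h) w / deriv h w)
        =ᶠ[𝓝 z] (fun w => (m : ℂ) * (w - z₀)⁻¹ + q w) := by
      filter_upwards [(hUo.inter isOpen_compl_singleton).eventually_mem
        ⟨hz, Set.mem_compl_singleton_iff.mpr hzz⟩] with w hw
      exact hF w hw.1 (Set.mem_compl_singleton_iff.mp hw.2)
    rw [hEq.deriv_eq]
    have h1 : HasDerivAt (fun w => (w - z₀)⁻¹) (-1 / (z - z₀) ^ 2) z := by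
      have := ((hasDerivAt_id z).sub_const z₀).inv (sub_ne_zero.mpr hzz)
      exact this
    have h2 : HasDerivAt q (deriv q z) z := (hqa z hz).differentiableAt.hasDerivAt
    rw [HasDerivAt.deriv (f := fun w => (m : ℂ) * (w - z₀)⁻¹ + q w) ((h1.const_mul ((m : ℂ))).add h2)]
  -- key identity for (z - z₀)² ⬝ schwarzian
  have hkey : ∀ z ∈ U, z ≠ z₀ → (z - z₀) ^ 2 * schwarzian h z
      = -(m : ℂ) + (z - z₀) ^ 2 * deriv q z
        - (1 / 2) * ((m : ℂ) + (z - z₀) * q z) ^ 2 := by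
    intro z hz hzz
    have hb : z - z₀ ≠ 0 := sub_ne_zero.mpr hzz
    rw [schwarzian, hdF z hz hzz, hF z hz hzz]
    field_simp
  -- limit computations
  have t1 : Filter.Tendsto (fun z => (z - z₀) ^ 2 * g z) (𝓝[≠] z₀) (𝓝 0) := by
    have hc : ContinuousAt (fun z => (z - z₀) ^ 2 * g z) z₀ :=
      ((continuousAt_id.sub continuousAt_const).pow 2).mul hgc
    have := hc.tendsto.mono_left (nhdsWithin_le_nhds (s := {z₀}ᶜ))
    simpa using this
  have hqc : ContinuousAt q z₀ := (hqa z₀ hz₀U).continuousAt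
  have hq'c : ContinuousAt (deriv q) z₀ :=
    (my_analyticAt_deriv (hqa z₀ hz₀U)).continuousAt
  have t2 : Filter.Tendsto (fun z => (z - z₀) ^ 2 * g z) (𝓝[≠] z₀)
      (𝓝 (-(m : ℂ) - (1 / 2) * (m : ℂ) ^ 2)) := by
    have hc : ContinuousAt (fun z => -(m : ℂ) + (z - z₀) ^ 2 * deriv q z
        - (1 / 2) * ((m : ℂ) + (z - z₀) * q z) ^ 2) z₀ :=
      (continuousAt_const.add
        (((continuousAt_id.sub continuousAt_const).pow 2).mul hq'c)).sub
        (continuousAt_const.mul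
          ((continuousAt_const.add
            ((continuousAt_id.sub continuousAt_const).mul hqc)).pow 2))
    have ht := hc.tendsto.mono_left (nhdsWithin_le_nhds (s := {z₀}ᶜ))
    have hval : -(m : ℂ) + (z₀ - z₀) ^ 2 * deriv q z₀
        - (1 / 2) * ((m : ℂ) + (z₀ - z₀) * q z₀) ^ 2
        = -(m : ℂ) - (1 / 2) * (m : ℂ) ^ 2 := by
      simp
    rw [hval] at ht
    refine ht.congr' ?_
    filter_upwards [hge, (hUo.eventually_mem hz₀U).filter_mono nhdsWithin_le_nhds,
      eventually_mem_nhdsWithin] with z e1 e2 e3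
    rw [e1]
    exact (hkey z e2 (Set.mem_compl_singleton_iff.mp e3)).symm
  have h0 : (0 : ℂ) = -(m : ℂ) - (1 / 2) * (m : ℂ) ^ 2 := tendsto_nhds_unique t1 t2
  have hcast : ((m * (m + 2) : ℕ) : ℂ) = 0 := by
    push_cast
    linear_combination (2 : ℂ) * h0
  have := Nat.cast_eq_zero.mp hcast
  rcases Nat.mul_eq_zero.mp this with h | h <;> omega

open Filter Topology in
/-- Let `D` be a domain in `ℂ` and `h` a non-constant meromorphic
function on `D` such that `{h, z}` is holomorphic on `D`. Then `h'` is non-vanishing at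
every point of `D` at which `h` is holomorphic. -/
theorem deriv_ne_zero_of_schwarzian_holomorphic
    (D : Set ℂ) (hD : IsOpen D) (hDconn : IsConnected D)
    (h g : ℂ → ℂ) (hmer : MeromorphicOn h D) (hnc : NonconstOn h D)
    (hg : AnalyticOnNhd ℂ g D)
    (hgs : ∀ z ∈ D, AnalyticAt ℂ h z → deriv h z ≠ 0 → g z = schwarzian h z) :
    ∀ z ∈ D, AnalyticAt ℂ h z → deriv h z ≠ 0 := by
  intro z₀ hz₀ hA
  by_contra hd0
  have hdA : AnalyticAt ℂ (deriv h) z₀ := my_analyticAt_deriv hA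
  by_cases htop : analyticOrderAt (deriv h) z₀ = ⊤
  · -- h' vanishes identically near z₀, hence h is locally constant; contradiction
    have hz : ∀ᶠ z in 𝓝 z₀, deriv h z = 0 := analyticOrderAt_eq_top.mp htop
    obtain ⟨ε, hε, hball⟩ := Metric.eventually_nhds_iff_ball.mp
      (hz.and hA.eventually_analyticAt)
    have hconst : ∀ z ∈ Metric.ball z₀ ε, h z₀ = h z := by
      intro z hzb
      refine Convex.is_const_of_fderivWithin_eq_zero (convex_ball z₀ ε)
        (fun w hw => ((hball w hw).2.differentiableAt).differentiableWithinAt)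
        (fun w hw => ?_) (Metric.mem_ball_self hε) hzb
      rw [fderivWithin_of_isOpen Metric.isOpen_ball hw]
      have hd := ((hball w hw).2.differentiableAt).hasDerivAt
      rw [(hball w hw).1] at hd
      rw [hd.hasFDerivAt.fderiv]
      ext
      simp
    have hloc : ∀ᶠ z in 𝓝[≠] z₀, h z = h z₀ := by
      have : ∀ᶠ z in 𝓝 z₀, h z = h z₀ := by
        filter_upwards [Metric.ball_mem_nhds z₀ hε] with z hzb
        exact (hconst z hzb).symm
      exact this.filter_mono nhdsWithin_le_nhds
    exact hnc ⟨h z₀, my_const_propagation D hD hDconn h hmer hz₀ hloc⟩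
  · obtain ⟨m, hm⟩ := ENat.ne_top_iff_exists.mp htop
    obtain ⟨u, hu, hu0, hev⟩ := (hdA.analyticOrderAt_eq_natCast (n := m)).mp hm.symm
    have hev' : ∀ᶠ z in 𝓝 z₀, deriv h z = (z - z₀) ^ m * u z := by
      filter_upwards [hev] with z hz
      rw [hz, smul_eq_mul]
    have hm1 : 1 ≤ m := by
      rcases Nat.eq_zero_or_pos m with h0 | h1
      · exfalso
        have hval := hev'.self_of_nhds
        rw [h0, pow_zero, one_mul, hd0] at hval
        exact hu0 hval.symm
      · exact h1
    have hge : ∀ᶠ z in 𝓝[≠] z₀, g z = schwarzian h z := by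
      filter_upwards [(hD.eventually_mem hz₀).filter_mono nhdsWithin_le_nhds,
        hA.eventually_analyticAt.filter_mono nhdsWithin_le_nhds,
        hev'.filter_mono nhdsWithin_le_nhds,
        (hu.continuousAt.eventually_ne hu0).filter_mono nhdsWithin_le_nhds,
        eventually_mem_nhdsWithin] with z h1 h2 h3 h4 h5
      refine hgs z h1 h2 ?_
      rw [h3]
      exact mul_ne_zero (pow_ne_zero _
        (sub_ne_zero.mpr (Set.mem_compl_singleton_iff.mp h5))) h4
    exact (my_schwarzian_pole hm1 hu hu0 hev' (hg z₀ hz₀).continuousAt hge).elim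
end
end

section
/- Let D be a domain in ℂ and let h be a non-constant meromorphic function on D such that {h, z} is holomorphic on D. Then every point of D is either a regular point of h or a simple pole of h; that is, h has no pole of order ≥ 2 in D. -/
noncomputable section

open Complex Filter Topology

private lemma analyticAt_deriv' {F : ℂ → ℂ} {w : ℂ} (hF : AnalyticAt ℂ F w) :
    AnalyticAt ℂ (deriv F) w := by
  obtain ⟨s, hs, hso, hws⟩ := eventually_nhds_iff.mp hF.eventually_analyticAt
  exact (AnalyticOnNhd.deriv (fun x hx => hs x hx)) w hws

private lemma deriv_zpow_mul (z₀ : ℂ) (k : ℤ) (F : ℂ → ℂ) {w : ℂ} (hw : w ≠ z₀)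
    (hF : DifferentiableAt ℂ F w) :
    deriv (fun u => (u - z₀) ^ k * F u) w
      = (w - z₀) ^ (k - 1) * ((k : ℂ) * F w + (w - z₀) * deriv F w) := by
  have hx : w - z₀ ≠ 0 := sub_ne_zero.mpr hw
  have h1 : HasDerivAt (fun u : ℂ => (u - z₀) ^ k) ((k : ℂ) * (w - z₀) ^ (k - 1)) w := by
    have := (hasDerivAt_zpow k (w - z₀) (Or.inl hx)).comp w ((hasDerivAt_id w).sub_const z₀)
    simpa [Function.comp_def] using this
  rw [(h1.fun_mul hF.hasDerivAt).deriv]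
  have hxz : (w - z₀) ^ k = (w - z₀) ^ (k - 1) * (w - z₀) := by
    rw [← zpow_add_one₀ hx, sub_add_cancel]
  rw [hxz]; ring

/-- Let `D` be a domain in `ℂ` and `h` a non-constant meromorphic
function on `D` such that `{h, z}` is holomorphic on `D`. Then every point of `D` is a
regular point or a simple pole of `h`; that is, `h` has no pole of order `≥ 2` in `D`
(each local order of `h` is at least `-1`). -/
theorem no_higher_order_poles_of_schwarzian_holomorphic
    (D : Set ℂ) (hD : IsOpen D) (hDconn : IsConnected D)
    (h g : ℂ → ℂ) (hmer : MeromorphicOn h D) (hnc : NonconstOn h D)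
    (hg : AnalyticOnNhd ℂ g D)
    (hgs : ∀ z ∈ D, AnalyticAt ℂ h z → deriv h z ≠ 0 → g z = schwarzian h z) :
    ∀ z : ℂ, ∀ hz : z ∈ D, (-1 : WithTop ℤ) ≤ meromorphicOrderAt h z := by
  intro z₀ hz
  by_contra hlt
  rw [not_le] at hlt
  have hne : meromorphicOrderAt h z₀ ≠ ⊤ := hlt.ne_top
  obtain ⟨m, hm⟩ := WithTop.ne_top_iff_exists.mp hne
  have hm2 : m < -1 := by
    rw [← hm, show ((-1 : WithTop ℤ)) = ((-1 : ℤ) : WithTop ℤ) from rfl] at hlt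
    exact WithTop.coe_lt_coe.mp hlt
  obtain ⟨f, hf_an, hf0, hfe⟩ := (meromorphicOrderAt_eq_int_iff (n := m) (hmer z₀ hz)).mp hm.symm
  set f₁ : ℂ → ℂ := fun w => (m : ℂ) * f w + (w - z₀) * deriv f w with hf₁def
  set f₂ : ℂ → ℂ := fun w => ((m : ℂ) - 1) * f₁ w + (w - z₀) * deriv f₁ w with hf₂def
  set q : ℂ → ℂ := fun w => f₂ w / f₁ w with hqdef
  set G : ℂ → ℂ := fun w => -q w + (w - z₀) * deriv q w - (1 / 2) * q w ^ 2 with hGdef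
  have hm0 : (m : ℂ) ≠ 0 := Int.cast_ne_zero.mpr (by omega)
  have hf₁0 : f₁ z₀ ≠ 0 := by
    simp only [hf₁def, sub_self, zero_mul, add_zero]
    exact mul_ne_zero hm0 hf0
  have hf₁an : ∀ {w : ℂ}, AnalyticAt ℂ f w → AnalyticAt ℂ f₁ w := fun hfw =>
    (analyticAt_const.mul hfw).add
      ((analyticAt_id.sub analyticAt_const).mul (analyticAt_deriv' hfw))
  have hf₂an : ∀ {w : ℂ}, AnalyticAt ℂ f w → AnalyticAt ℂ f₂ w := fun hfw =>
    (analyticAt_const.mul (hf₁an hfw)).add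
      ((analyticAt_id.sub analyticAt_const).mul (analyticAt_deriv' (hf₁an hfw)))
  -- gather all the local facts on a punctured neighbourhood
  have hEv : ∀ᶠ w in 𝓝[≠] z₀, w ∈ D ∧ AnalyticAt ℂ f w ∧ f₁ w ≠ 0 ∧
      h w = (w - z₀) ^ m * f w ∧ AnalyticAt ℂ h w := by
    have e1 : ∀ᶠ w in 𝓝 z₀, w ∈ D := hD.eventually_mem hz
    have e2 := hf_an.eventually_analyticAt
    have e3 : ∀ᶠ w in 𝓝 z₀, f₁ w ≠ 0 := (hf₁an hf_an).continuousAt.eventually_ne hf₁0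
    have e5 := (hmer z₀ hz).eventually_analyticAt
    filter_upwards [e1.filter_mono nhdsWithin_le_nhds, e2.filter_mono nhdsWithin_le_nhds,
      e3.filter_mono nhdsWithin_le_nhds, hfe, e5] with w h1 h2 h3 h4 h5
    exact ⟨h1, h2, h3, by rw [h4, smul_eq_mul], h5⟩
  obtain ⟨U, hUo, hz₀U, hUsub⟩ := mem_nhdsWithin.mp hEv
  set V : Set ℂ := U ∩ {z₀}ᶜ with hVdef
  have hVo : IsOpen V := hUo.inter isClosed_singleton.isOpen_compl
  have hVsub : ∀ w ∈ V, w ∈ D ∧ AnalyticAt ℂ f w ∧ f₁ w ≠ 0 ∧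
      h w = (w - z₀) ^ m * f w ∧ AnalyticAt ℂ h w := fun w hw => hUsub hw
  have hVne : ∀ w ∈ V, w ≠ z₀ := fun w hw => hw.2
  have key1 : ∀ w ∈ V, deriv h w = (w - z₀) ^ (m - 1) * f₁ w := by
    intro w hw
    have hEq : h =ᶠ[𝓝 w] fun u => (u - z₀) ^ m * f u :=
      Filter.eventuallyEq_of_mem (hVo.mem_nhds hw) (fun u hu => (hVsub u hu).2.2.2.1)
    rw [hEq.deriv_eq, deriv_zpow_mul z₀ m f (hVne w hw) (hVsub w hw).2.1.differentiableAt]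
  have key2 : ∀ w ∈ V, deriv (deriv h) w = (w - z₀) ^ (m - 2) * f₂ w := by
    intro w hw
    have hEq : deriv h =ᶠ[𝓝 w] fun u => (u - z₀) ^ (m - 1) * f₁ u :=
      Filter.eventuallyEq_of_mem (hVo.mem_nhds hw) (fun u hu => key1 u hu)
    rw [hEq.deriv_eq, deriv_zpow_mul z₀ (m - 1) f₁ (hVne w hw)
      (hf₁an (hVsub w hw).2.1).differentiableAt]
    have e1 : m - 1 - 1 = m - 2 := by ring
    rw [e1, hf₂def]
    push_cast
    ring
  have key3 : ∀ w ∈ V, deriv (deriv h) w / deriv h w = (w - z₀)⁻¹ * q w := by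
    intro w hw
    have hx : w - z₀ ≠ 0 := sub_ne_zero.mpr (hVne w hw)
    have hf₁w : f₁ w ≠ 0 := (hVsub w hw).2.2.1
    rw [key1 w hw, key2 w hw]
    have hsplit : (w - z₀) ^ (m - 2) = (w - z₀) ^ (m - 1) * (w - z₀)⁻¹ := by
      rw [← zpow_neg_one, ← zpow_add₀ hx]
      congr 1
      ring
    have hzp : (w - z₀) ^ (m - 1) ≠ 0 := zpow_ne_zero _ hx
    rw [hsplit, mul_assoc, mul_div_mul_left _ _ hzp, hqdef, mul_div_assoc]
  have key4 : ∀ w ∈ V, g w = (w - z₀) ^ (-2 : ℤ) * G w := by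
    intro w hw
    obtain ⟨hwD, hfw, hf₁w, hhw, hhan⟩ := hVsub w hw
    have hwne : w ≠ z₀ := hVne w hw
    have hx : w - z₀ ≠ 0 := sub_ne_zero.mpr hwne
    have hd : deriv h w ≠ 0 := by
      rw [key1 w hw]; exact mul_ne_zero (zpow_ne_zero _ hx) hf₁w
    rw [hgs w hwD hhan hd]
    unfold schwarzian
    have hqw : AnalyticAt ℂ q w := (hf₂an hfw).div (hf₁an hfw) hf₁w
    have hEq : (fun u => deriv (deriv h) u / deriv h u) =ᶠ[𝓝 w]
        fun u => (u - z₀) ^ (-1 : ℤ) * q u := by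
      refine Filter.eventuallyEq_of_mem (hVo.mem_nhds hw) (fun u hu => ?_)
      rw [key3 u hu, zpow_neg_one]
    rw [hEq.deriv_eq, deriv_zpow_mul z₀ (-1) q hwne hqw.differentiableAt, key3 w hw]
    have e1 : (-1 - 1 : ℤ) = -2 := by ring
    rw [e1]
    simp only [hGdef]
    have e2 : (w - z₀) ^ (-2 : ℤ) = ((w - z₀) * (w - z₀))⁻¹ := by
      rw [zpow_neg, show ((2 : ℤ)) = ((2 : ℕ) : ℤ) from rfl, zpow_natCast, sq]
    rw [e2]
    push_cast
    field_simp
  -- analyticity and nonvanishing of G at z₀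
  have hq_z₀ : AnalyticAt ℂ q z₀ := (hf₂an hf_an).div (hf₁an hf_an) hf₁0
  have hG_an : AnalyticAt ℂ G z₀ :=
    ((hq_z₀.neg).add ((analyticAt_id.sub analyticAt_const).mul (analyticAt_deriv' hq_z₀))).sub
      (analyticAt_const.mul (hq_z₀.pow 2))
  have hq0 : q z₀ = (m : ℂ) - 1 := by
    have hf₂z : f₂ z₀ = ((m : ℂ) - 1) * f₁ z₀ := by
      simp [hf₂def]
    rw [hqdef]
    simp only [hf₂z]
    exact mul_div_cancel_right₀ _ hf₁0
  have hG0 : G z₀ ≠ 0 := by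
    have hGz : G z₀ = -((m : ℂ) - 1) - (1 / 2) * ((m : ℂ) - 1) ^ 2 := by
      rw [hGdef]; simp [hq0]
    intro hc
    rw [hGz] at hc
    have h2 : ((m : ℂ) - 1) * ((m : ℂ) + 1) = 0 := by linear_combination (-2 : ℂ) * hc
    rcases mul_eq_zero.mp h2 with h' | h'
    · exact (sub_ne_zero.mpr (show (m : ℂ) ≠ 1 by exact_mod_cast (by omega : m ≠ 1))) h'
    · have hm' : (m : ℂ) = -1 := by linear_combination h'
      have : m = -1 := by exact_mod_cast hm'
      omega
  -- conclude: g would have a pole of order 2 at z₀, contradicting analyticity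
  have hVmem : V ∈ 𝓝[≠] z₀ := mem_nhdsWithin.mpr ⟨U, hUo, hz₀U, subset_rfl⟩
  have hge : ∀ᶠ w in 𝓝[≠] z₀, g w = (w - z₀) ^ (-2 : ℤ) • G w := by
    refine Filter.eventually_iff.mpr (Filter.mem_of_superset hVmem fun w hw => ?_)
    simp only [Set.mem_setOf_eq, smul_eq_mul]
    exact key4 w hw
  have hord : (meromorphicOrderAt g z₀) = ((-2 : ℤ) : WithTop ℤ) :=
    (meromorphicOrderAt_eq_int_iff (n := -2) (hg z₀ hz).meromorphicAt).mpr ⟨G, hG_an, hG0, hge⟩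
  have hord2 : ((-2 : ℤ) : WithTop ℤ) = (analyticOrderAt g z₀).map (fun n : ℕ => (n : ℤ)) :=
    hord.symm.trans (hg z₀ hz).meromorphicOrderAt_eq
  cases horder : analyticOrderAt g z₀ with
  | top =>
    rw [horder, ENat.map_top] at hord2
    exact WithTop.coe_ne_top hord2
  | coe n =>
    rw [horder] at hord2
    have h3 : ((-2 : ℤ) : WithTop ℤ) = ((n : ℤ) : WithTop ℤ) := by
      rw [hord2]; rfl
    have h4 : (n : ℤ) = -2 := (WithTop.coe_inj.mp h3).symm
    omega
end
end

section
/- Let z₀ ∈ ℂ, let n ≥ 1 be an integer, and let p be holomorphic on a neighborhood U of z₀ with p(z₀) ≠ 0. Suppose h is holomorphic on U with h′(z) = (z−z₀)ⁿ p(z). Then for all z ∈ U with z ≠ z₀ and h′(z) ≠ 0, one has {h, z} = −n(n+2)/(2(z−z₀)²) − n p′(z)/((z−z₀)p(z)) + (2p(z)p″(z) − 3p′(z)²)/(2p(z)²). In particular, {h, z} has a pole of order exactly 2 at z₀. -/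
noncomputable section

open Complex Filter
open scoped Topology

private lemma schwarzian_key (M x P P' P'' : ℂ) (hx : x ≠ 0) (hP : P ≠ 0) :
    (-M/x^2 + (P''*P - P'*P')/P^2) - (1/2)*(M/x + P'/P)^2
    = -(M * (M+2))/(2*x^2) - M*P'/(x*P) + (2*P*P''-3*P'^2)/(2*P^2) := by
  field_simp
  ring

private lemma schwarzian_key2 (M x P P' P'' : ℂ) (hx : x ≠ 0) (hP : P ≠ 0) :
    -(M * (M+2))/(2*x^2) - M*P'/(x*P) + (2*P*P''-3*P'^2)/(2*P^2)
    = x^(-2:ℤ) • (-(M * (M+2))/2 - M*P'*x/P + x^2*(2*P*P''-3*P'^2)/(2*P^2)) := by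
  rw [smul_eq_mul, zpow_neg, show ((2:ℤ) = ((2:ℕ):ℤ)) from rfl, zpow_natCast]
  rw [inv_mul_eq_div, eq_div_iff (pow_ne_zero _ hx)]
  field_simp

/-- Let `z₀ ∈ ℂ`, `n ≥ 1`, and `p` holomorphic on a neighborhood `U`
of `z₀` with `p z₀ ≠ 0`. Suppose `h` is holomorphic on `U` with `h' z = (z - z₀)^n p z`.
Then, away from `z₀` and the zeros of `h'`,
`{h, z} = -n(n+2)/(2(z-z₀)²) - n p'(z)/((z-z₀) p(z)) + (2 p p'' - 3 p'²)/(2 p²)`;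
in particular `{h, z}` has a pole of order exactly `2` at `z₀`. -/
theorem schwarzian_formula_of_deriv_eq_zpow_smul
    (U : Set ℂ) (hU : IsOpen U) (z₀ : ℂ) (hz₀ : z₀ ∈ U) (n : ℕ) (hn : 1 ≤ n)
    (p h : ℂ → ℂ) (hp : AnalyticOnNhd ℂ p U) (hp0 : p z₀ ≠ 0)
    (hh : AnalyticOnNhd ℂ h U)
    (hder : ∀ z ∈ U, deriv h z = (z - z₀) ^ n * p z) :
    (∀ z ∈ U, z ≠ z₀ → deriv h z ≠ 0 →
      schwarzian h z =
        -((n : ℂ) * ((n : ℂ) + 2)) / (2 * (z - z₀) ^ 2)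
          - (n : ℂ) * deriv p z / ((z - z₀) * p z)
          + (2 * p z * deriv (deriv p) z - 3 * (deriv p z) ^ 2) / (2 * (p z) ^ 2)) ∧
    ∃ hm : MeromorphicAt (schwarzian h) z₀, meromorphicOrderAt (schwarzian h) z₀ = -2 := by
  obtain ⟨m, rfl⟩ : ∃ m, n = m + 1 := ⟨n - 1, (Nat.succ_pred_eq_of_pos hn).symm⟩
  have hpd : AnalyticOnNhd ℂ (deriv p) U := hp.deriv
  -- second derivative of h on U
  have hdd : ∀ z ∈ U, deriv (deriv h) z
      = ((m:ℂ)+1)*(z - z₀)^m * p z + (z-z₀)^(m+1) * deriv p z := by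
    intro z hz
    have hev : deriv h =ᶠ[𝓝 z] (fun w => (w - z₀)^(m+1) * p w) := by
      filter_upwards [hU.mem_nhds hz] with w hw using hder w hw
    rw [hev.deriv_eq]
    have h1 : HasDerivAt (fun w => (w - z₀)^(m+1)) (((m:ℂ)+1)*(z - z₀)^m) z := by
      have := ((hasDerivAt_id z).sub_const z₀).pow (m+1)
      simpa [Pi.pow_def] using this
    exact (h1.mul (hp z hz).differentiableAt.hasDerivAt).deriv
  have part1 : ∀ z ∈ U, z ≠ z₀ → deriv h z ≠ 0 →
      schwarzian h z =
        -(((m+1:ℕ) : ℂ) * (((m+1:ℕ) : ℂ) + 2)) / (2 * (z - z₀) ^ 2)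
          - ((m+1:ℕ) : ℂ) * deriv p z / ((z - z₀) * p z)
          + (2 * p z * deriv (deriv p) z - 3 * (deriv p z) ^ 2) / (2 * (p z) ^ 2) := by
    intro z hz hne hd
    have hpz : p z ≠ 0 := by
      intro h0
      exact hd (by rw [hder z hz, h0, mul_zero])
    have hzz : z - z₀ ≠ 0 := sub_ne_zero.mpr hne
    have hev : ∀ᶠ w in 𝓝 z, w ∈ U ∧ w ≠ z₀ ∧ p w ≠ 0 := by
      filter_upwards [hU.mem_nhds hz, eventually_ne_nhds hne,
        (hp z hz).continuousAt.eventually_ne hpz] with w h1 h2 h3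
      exact ⟨h1, h2, h3⟩
    have hratio : (fun w => deriv (deriv h) w / deriv h w)
        =ᶠ[𝓝 z] (fun w => ((m:ℂ)+1)/(w - z₀) + deriv p w / p w) := by
      filter_upwards [hev] with w ⟨hwU, hwz, hwp⟩
      have hwzz : w - z₀ ≠ 0 := sub_ne_zero.mpr hwz
      rw [hdd w hwU, hder w hwU]
      field_simp
      ring
    have h1 : HasDerivAt (fun w => ((m:ℂ)+1)/(w - z₀)) (-((m:ℂ)+1)/(z-z₀)^2) z := by
      have := (hasDerivAt_const z ((m:ℂ)+1)).div ((hasDerivAt_id z).sub_const z₀) hzz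
      simpa [Pi.div_def] using this
    have h2 : HasDerivAt (fun w => deriv p w / p w)
        ((deriv (deriv p) z * p z - deriv p z * deriv p z)/(p z)^2) z :=
      ((hpd z hz).differentiableAt.hasDerivAt).div ((hp z hz).differentiableAt.hasDerivAt) hpz
    have hdr : deriv (fun w => deriv (deriv h) w / deriv h w) z
        = -((m:ℂ)+1)/(z-z₀)^2
          + (deriv (deriv p) z * p z - deriv p z * deriv p z)/(p z)^2 := by
      rw [hratio.deriv_eq]
      exact (h1.add h2).deriv
    have hval : deriv (deriv h) z / deriv h z = ((m:ℂ)+1)/(z - z₀) + deriv p z / p z :=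
      hratio.self_of_nhds
    rw [schwarzian, hdr, hval,
      schwarzian_key ((m:ℂ)+1) (z - z₀) (p z) (deriv p z) (deriv (deriv p) z) hzz hpz]
    push_cast
    ring
  refine ⟨part1, ?_⟩
  -- Part 2 : meromorphy and order
  set G : ℂ → ℂ := fun z => -(((m+1:ℕ):ℂ) * (((m+1:ℕ):ℂ)+2))/2
      - ((m+1:ℕ):ℂ) * deriv p z * (z - z₀) / p z
      + (z - z₀)^2 * (2 * p z * deriv (deriv p) z - 3 * (deriv p z)^2) / (2 * (p z)^2)
    with hGdef
  have hid : AnalyticAt ℂ (fun z : ℂ => z - z₀) z₀ := analyticAt_id.sub analyticAt_const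
  have hnum : AnalyticAt ℂ
      (fun z => 2 * p z * deriv (deriv p) z - 3 * (deriv p z)^2) z₀ :=
    ((analyticAt_const.mul (hp z₀ hz₀)).mul (hpd.deriv z₀ hz₀)).sub
      (analyticAt_const.mul ((hpd z₀ hz₀).pow 2))
  have hG : AnalyticAt ℂ G z₀ := by
    apply AnalyticAt.add
    · apply AnalyticAt.sub analyticAt_const
      exact ((analyticAt_const.mul (hpd z₀ hz₀)).mul hid).div (hp z₀ hz₀) hp0
    · exact ((hid.pow 2).mul hnum).div (analyticAt_const.mul ((hp z₀ hz₀).pow 2))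
        (by simpa using pow_ne_zero 2 hp0)
  have hGz0 : G z₀ ≠ 0 := by
    have h1 : G z₀ = -(((m+1:ℕ):ℂ) * (((m+1:ℕ):ℂ)+2))/2 := by
      simp [hGdef, sub_self]
    rw [h1]
    have hm1 : ((m+1:ℕ):ℂ) ≠ 0 := Nat.cast_ne_zero.mpr (by omega)
    have hm3 : ((m+1:ℕ):ℂ)+2 ≠ 0 := by
      have : ((m+1:ℕ):ℂ)+2 = ((m+3:ℕ):ℂ) := by push_cast; ring
      rw [this]
      exact Nat.cast_ne_zero.mpr (by omega)
    exact div_ne_zero (neg_ne_zero.mpr (mul_ne_zero hm1 hm3)) two_ne_zero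
  have hevF : schwarzian h =ᶠ[𝓝[≠] z₀] fun z => (z - z₀)^(-2 : ℤ) • G z := by
    have h1 : ∀ᶠ z in 𝓝 z₀, z ∈ U ∧ p z ≠ 0 := by
      filter_upwards [hU.mem_nhds hz₀, (hp z₀ hz₀).continuousAt.eventually_ne hp0] with z a b
      exact ⟨a, b⟩
    filter_upwards [h1.filter_mono nhdsWithin_le_nhds, self_mem_nhdsWithin] with z hz1 hzne
    obtain ⟨hzU, hpz⟩ := hz1
    have hne : z ≠ z₀ := hzne
    have hd : deriv h z ≠ 0 := by
      rw [hder z hzU]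
      exact mul_ne_zero (pow_ne_zero _ (sub_ne_zero.mpr hne)) hpz
    rw [part1 z hzU hne hd,
      schwarzian_key2 (((m+1:ℕ)):ℂ) (z - z₀) (p z) (deriv p z) (deriv (deriv p) z)
        (sub_ne_zero.mpr hne) hpz]
  have hmer2 : MeromorphicAt (fun z => (z - z₀)^(-2:ℤ) • G z) z₀ := by
    have h1 : MeromorphicAt (fun z : ℂ => (z - z₀)^(-2:ℤ)) z₀ := by
      have h2 := ((MeromorphicAt.id z₀).sub (MeromorphicAt.const z₀ z₀)).zpow (-2)
      have h3 : ((id - fun _ => z₀ : ℂ → ℂ) ^ (-2:ℤ)) = fun z : ℂ => (z - z₀)^(-2:ℤ) := by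
        funext z
        simp [Pi.pow_apply]
      rwa [h3] at h2
    exact h1.smul hG.meromorphicAt
  have hm : MeromorphicAt (schwarzian h) z₀ := hmer2.congr hevF.symm
  refine ⟨hm, ?_⟩
  rw [show (-2 : WithTop ℤ) = ((-2 : ℤ) : WithTop ℤ) from rfl, meromorphicOrderAt_eq_int_iff hm]
  exact ⟨G, hG, hGz0, hevF⟩
end
end

section
/- Let U be an open subset of ℂ, let h be holomorphic on U with h′ non-vanishing on U, and let G be a holomorphic function on U with G² = h′. Then f₁ := h/G and f₂ := 1/G are holomorphic on U and satisfy the differential equation y″ + (1/2){h, z} y = 0 on U; that is, f₁″ = −(1/2){h, z} f₁ and f₂″ = −(1/2){h, z} f₂. -/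
noncomputable section

open Complex

/-- Let `U ⊆ ℂ` be open, `h` holomorphic on `U` with `h'`
non-vanishing on `U`, and `G` holomorphic on `U` with `G² = h'`. Then `f₁ = h / G` and
`f₂ = 1 / G` are holomorphic on `U` and satisfy `y'' + (1/2) {h, z} y = 0` on `U`. -/
theorem ratio_solutions_of_sqrt_deriv
    (U : Set ℂ) (hU : IsOpen U) (h G : ℂ → ℂ)
    (hh : AnalyticOnNhd ℂ h U) (hder : ∀ z ∈ U, deriv h z ≠ 0)
    (hG : AnalyticOnNhd ℂ G U) (hG2 : ∀ z ∈ U, G z ^ 2 = deriv h z) :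
    AnalyticOnNhd ℂ (fun z => h z / G z) U ∧
    AnalyticOnNhd ℂ (fun z => 1 / G z) U ∧
    (∀ z ∈ U, deriv (deriv (fun w => h w / G w)) z =
      -(1 / 2) * schwarzian h z * (h z / G z)) ∧
    (∀ z ∈ U, deriv (deriv (fun w => 1 / G w)) z =
      -(1 / 2) * schwarzian h z * (1 / G z)) := by
  have hGne : ∀ z ∈ U, G z ≠ 0 := by
    intro z hz hzero
    exact hder z hz (by rw [← hG2 z hz, hzero]; ring)
  have hG' : AnalyticOnNhd ℂ (deriv G) U := hG.deriv
  have hh' : AnalyticOnNhd ℂ (deriv h) U := hh.deriv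
  have hf1 : AnalyticOnNhd ℂ (fun z => h z / G z) U :=
    fun z hz => (hh z hz).div (hG z hz) (hGne z hz)
  have hf2 : AnalyticOnNhd ℂ (fun z => 1 / G z) U :=
    fun z hz => analyticAt_const.div (hG z hz) (hGne z hz)
  -- h'' = 2 G G' on U
  have e2 : ∀ z ∈ U, deriv (deriv h) z = 2 * G z * deriv G z := by
    intro z hz
    have heq : (fun w => G w ^ 2) =ᶠ[nhds z] deriv h :=
      Filter.eventuallyEq_of_mem (hU.mem_nhds hz) hG2
    have hp : HasDerivAt (fun w => G w ^ 2) (2 * G z ^ 1 * deriv G z) z := by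
      simpa using ((hG z hz).differentiableAt.hasDerivAt).fun_pow 2
    rw [← heq.deriv_eq, hp.deriv]; ring
  -- first derivative of f₂
  have d2 : ∀ z ∈ U, deriv (fun w => 1 / G w) z = -(deriv G z) / G z ^ 2 := by
    intro z hz
    have hp : HasDerivAt (fun w => 1 / G w)
        ((0 * G z - 1 * deriv G z) / G z ^ 2) z :=
      (hasDerivAt_const z (1 : ℂ)).div ((hG z hz).differentiableAt.hasDerivAt) (hGne z hz)
    rw [hp.deriv]; ring
  -- first derivative of f₁
  have d1 : ∀ z ∈ U, deriv (fun w => h w / G w) z =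
      (deriv h z * G z - h z * deriv G z) / G z ^ 2 := by
    intro z hz
    exact (((hh z hz).differentiableAt.hasDerivAt).div
      ((hG z hz).differentiableAt.hasDerivAt) (hGne z hz)).deriv
  -- Schwarzian in terms of G
  have eS : ∀ z ∈ U, schwarzian h z =
      2 * deriv (deriv G) z / G z - 4 * (deriv G z) ^ 2 / G z ^ 2 := by
    intro z hz
    have heq : (fun w => deriv (deriv h) w / deriv h w) =ᶠ[nhds z]
        (fun w => 2 * deriv G w / G w) := by
      apply Filter.eventuallyEq_of_mem (hU.mem_nhds hz)
      intro w hw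
      show deriv (deriv h) w / deriv h w = 2 * deriv G w / G w
      rw [e2 w hw, ← hG2 w hw]
      field_simp [hGne w hw]
    have hp : HasDerivAt (fun w => 2 * deriv G w / G w)
        ((2 * deriv (deriv G) z * G z - 2 * deriv G z * deriv G z) / G z ^ 2) z :=
      (((hG' z hz).differentiableAt.hasDerivAt).const_mul 2).div
        ((hG z hz).differentiableAt.hasDerivAt) (hGne z hz)
    rw [schwarzian, heq.deriv_eq, hp.deriv, e2 z hz, ← hG2 z hz]
    field_simp [hGne z hz]
    ring
  refine ⟨hf1, hf2, ?_, ?_⟩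
  · intro z hz
    have heq : deriv (fun w => h w / G w) =ᶠ[nhds z]
        (fun w => (deriv h w * G w - h w * deriv G w) / G w ^ 2) :=
      Filter.eventuallyEq_of_mem (hU.mem_nhds hz) d1
    have hnum : HasDerivAt (fun w => deriv h w * G w - h w * deriv G w)
        ((deriv (deriv h) z * G z + deriv h z * deriv G z) -
          (deriv h z * deriv G z + h z * deriv (deriv G) z)) z :=
      (((hh' z hz).differentiableAt.hasDerivAt).mul
        ((hG z hz).differentiableAt.hasDerivAt)).sub
      (((hh z hz).differentiableAt.hasDerivAt).mul
        ((hG' z hz).differentiableAt.hasDerivAt))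
    have hden : HasDerivAt (fun w => G w ^ 2) (2 * G z ^ 1 * deriv G z) z := by
      simpa using ((hG z hz).differentiableAt.hasDerivAt).fun_pow 2
    have hp := hnum.fun_div hden (pow_ne_zero 2 (hGne z hz))
    rw [heq.deriv_eq, hp.deriv, eS z hz, e2 z hz, ← hG2 z hz]
    field_simp [hGne z hz]
    ring
  · intro z hz
    have heq : deriv (fun w => 1 / G w) =ᶠ[nhds z]
        (fun w => -(deriv G w) / G w ^ 2) :=
      Filter.eventuallyEq_of_mem (hU.mem_nhds hz) d2
    have hnum : HasDerivAt (fun w => -(deriv G w)) (-(deriv (deriv G) z)) z :=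
      ((hG' z hz).differentiableAt.hasDerivAt).neg
    have hden : HasDerivAt (fun w => G w ^ 2) (2 * G z ^ 1 * deriv G z) z := by
      simpa using ((hG z hz).differentiableAt.hasDerivAt).fun_pow 2
    have hp := hnum.fun_div hden (pow_ne_zero 2 (hGne z hz))
    rw [heq.deriv_eq, hp.deriv, eS z hz]
    field_simp [hGne z hz]
    ring
end
end

section
/- Let D be a simply connected domain in ℂ, let g be holomorphic on D, and let h be a non-constant meromorphic function on D with {h, z} = g. If y₁ and y₂ are two linearly independent holomorphic solutions on D of y″ + (1/2)g y = 0, then there exists α = [[a,b],[c,d]] ∈ GL₂(ℂ) such that h = (a·(y₁/y₂) + b)/(c·(y₁/y₂) + d); in particular, setting (f₁, f₂) := (y₁, y₂)·αᵀ, one has h = f₁/f₂ with f₁, f₂ holomorphic solutions of y″ + (1/2)g y = 0. -/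
noncomputable section

open Complex

open Filter Metric Set Topology

lemma merom_dichotomy {f : ℂ → ℂ} {x : ℂ} (hf : MeromorphicAt f x) :
    (∀ᶠ z in 𝓝[≠] x, f z = 0) ∨ (∀ᶠ z in 𝓝[≠] x, f z ≠ 0) := by
  rcases eq_or_ne (meromorphicOrderAt f x) ⊤ with h | h
  · exact Or.inl (meromorphicOrderAt_eq_top_iff.mp h)
  · obtain ⟨n, hn⟩ := WithTop.ne_top_iff_exists.mp h
    obtain ⟨g, hg_an, hg_ne, hg_eq⟩ := (meromorphicOrderAt_eq_int_iff hf).mp hn.symm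
    refine Or.inr ?_
    have h1 : ∀ᶠ z in 𝓝[≠] x, g z ≠ 0 :=
      (hg_an.continuousAt.eventually_ne hg_ne).filter_mono nhdsWithin_le_nhds
    filter_upwards [hg_eq, h1, self_mem_nhdsWithin] with z h2 h3 h4
    rw [h2, smul_eq_mul]
    exact mul_ne_zero (zpow_ne_zero _ (sub_ne_zero.mpr h4)) h3

lemma eq_zero_of_eventually_punctured {f : ℂ → ℂ} {z : ℂ} (hf : ContinuousAt f z)
    (h : ∀ᶠ w in 𝓝[≠] z, f w = 0) : f z = 0 := by
  have h1 : Filter.Tendsto f (𝓝[≠] z) (𝓝 (f z)) := hf.continuousWithinAt.tendsto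
  have h2 : Filter.Tendsto f (𝓝[≠] z) (𝓝 0) :=
    Filter.Tendsto.congr' (Filter.EventuallyEq.symm h) tendsto_const_nhds
  exact tendsto_nhds_unique h1 h2

lemma merom_spread {f : ℂ → ℂ} {D : Set ℂ} (hDc : IsPreconnected D)
    (hf : MeromorphicOn f D) {z₀ : ℂ} (hz₀ : z₀ ∈ D) (h0 : ∀ᶠ z in 𝓝 z₀, f z = 0) :
    ∀ z ∈ D, ∀ᶠ w in 𝓝[≠] z, f w = 0 := by
  set u : Set ℂ := {z : ℂ | ∀ᶠ w in 𝓝[≠] z, f w = 0} with hu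
  have hu_open : IsOpen u := by
    rw [isOpen_iff_mem_nhds]
    intro z hz
    have hz' : ∀ᶠ w in 𝓝 z, w ∈ ({z}ᶜ : Set ℂ) → f w = 0 := eventually_nhdsWithin_iff.mp hz
    obtain ⟨t, ht_sub, ht_open, ht_mem⟩ := _root_.eventually_nhds_iff.mp hz'
    have : t ⊆ u := by
      intro z' hz'
      rcases eq_or_ne z' z with rfl | hne
      · exact hz
      · have : ∀ᶠ w in 𝓝 z', f w = 0 := by
          filter_upwards [ht_open.mem_nhds hz', eventually_ne_nhds hne] with w hw hwz
          exact ht_sub w hw hwz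
        exact this.filter_mono nhdsWithin_le_nhds
    exact Filter.mem_of_superset (ht_open.mem_nhds ht_mem) this
  have hsub : D ⊆ u := by
    apply hDc.subset_of_closure_inter_subset hu_open ⟨z₀, hz₀, h0.filter_mono nhdsWithin_le_nhds⟩
    intro z ⟨hzc, hzD⟩
    rcases merom_dichotomy (hf z hzD) with h | h
    · exact h
    · have h' : ∀ᶠ w in 𝓝 z, w ∈ ({z}ᶜ : Set ℂ) → f w ≠ 0 := eventually_nhdsWithin_iff.mp h
      obtain ⟨t, ht_sub, ht_open, ht_mem⟩ := _root_.eventually_nhds_iff.mp h'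
      obtain ⟨s, hs_t, hs_u⟩ := mem_closure_iff.mp hzc t ht_open ht_mem
      rcases eq_or_ne s z with rfl | hne
      · exact hs_u
      · exfalso
        have h1 : ∀ᶠ w in 𝓝[≠] s, f w ≠ 0 := by
          rw [eventually_nhdsWithin_iff]
          filter_upwards [ht_open.mem_nhds hs_t, eventually_ne_nhds hne] with w hw hwz _
          exact ht_sub w hw hwz
        have hs_u' : ∀ᶠ w in 𝓝[≠] s, f w = 0 := hs_u
        obtain ⟨w, hw1, hw2⟩ := (hs_u'.and h1).exists
        exact hw2 hw1
  exact fun z hz => hsub hz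


lemma AnalyticAt.deriv' {f : ℂ → ℂ} {x : ℂ} (h : AnalyticAt ℂ f x) :
    AnalyticAt ℂ (deriv f) x := by
  obtain ⟨r, hr, h2⟩ := Metric.eventually_nhds_iff_ball.mp h.eventually_analyticAt
  exact (AnalyticOnNhd.deriv (fun z hz => h2 z hz)) x (mem_ball_self hr)

lemma const_on_ball {f : ℂ → ℂ} {c : ℂ} {r : ℝ}
    (hf : ∀ z ∈ Metric.ball c r, DifferentiableAt ℂ f z)
    (h0 : ∀ z ∈ Metric.ball c r, deriv f z = 0) :
    ∀ z ∈ Metric.ball c r, f z = f c := by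
  intro z hz
  have hrpos : 0 < r := lt_of_le_of_lt dist_nonneg (mem_ball.mp hz)
  have hc : c ∈ Metric.ball c r := mem_ball_self hrpos
  refine (convex_ball c r).is_const_of_fderivWithin_eq_zero (𝕜 := ℂ)
    (fun w hw => (hf w hw).differentiableWithinAt) (fun w hw => ?_) hz hc
  rw [fderivWithin_of_isOpen isOpen_ball hw, ← toSpanSingleton_deriv, h0 w hw]
  ext v
  simp

lemma const_of_deriv_zero {f : ℂ → ℂ} {D : Set ℂ} (hD : IsOpen D) (hDc : IsPreconnected D)
    (hf : AnalyticOnNhd ℂ f D) (h0 : ∀ z ∈ D, deriv f z = 0) {p : ℂ} (hp : p ∈ D) :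
    ∀ z ∈ D, f z = f p := by
  obtain ⟨r, hr, hball⟩ := Metric.isOpen_iff.mp hD p hp
  have hev : f =ᶠ[𝓝 p] (fun _ => f p) := by
    filter_upwards [ball_mem_nhds p hr] using
      const_on_ball (fun z hz => (hf z (hball hz)).differentiableAt)
        (fun z hz => h0 z (hball hz))
  exact fun z hz =>
    hf.eqOn_of_preconnected_of_eventuallyEq analyticOnNhd_const hDc hp hev hz

lemma deriv_congr_ball {f F : ℂ → ℂ} {c : ℂ} {r : ℝ} (h : ∀ w ∈ Metric.ball c r, f w = F w)
    {z : ℂ} (hz : z ∈ Metric.ball c r) : deriv f z = deriv F z :=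
  Filter.EventuallyEq.deriv_eq (by filter_upwards [isOpen_ball.mem_nhds hz] using h)

lemma exists_sqrt_deriv {h : ℂ → ℂ} {z₀ : ℂ} {r : ℝ} (hz₀ : z₀ ∈ Metric.ball z₀ r)
    (hB : ∀ z ∈ Metric.ball z₀ r, AnalyticAt ℂ h z)
    (hd : ∀ z ∈ Metric.ball z₀ r, deriv h z ≠ 0)
    (hslit : ∀ z ∈ Metric.ball z₀ r, deriv h z / deriv h z₀ ∈ slitPlane) :
    ∃ s : ℂ → ℂ, (∀ z ∈ Metric.ball z₀ r, AnalyticAt ℂ s z) ∧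
      (∀ z ∈ Metric.ball z₀ r, s z ^ 2 = deriv h z) := by
  refine ⟨fun z => Complex.exp ((Complex.log (deriv h z / deriv h z₀) +
      Complex.log (deriv h z₀)) / 2), fun z hz => ?_, fun z hz => ?_⟩
  · have h1 : AnalyticAt ℂ (fun z => deriv h z / deriv h z₀) z :=
      (hB z hz).deriv'.div analyticAt_const (hd z₀ hz₀)
    have h2 : AnalyticAt ℂ (fun z => Complex.log (deriv h z / deriv h z₀)) z :=
      h1.clog (hslit z hz)
    exact (((h2.add analyticAt_const).div analyticAt_const two_ne_zero)).cexp
  · rw [← Complex.exp_nat_mul]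
    have e1 : (2 : ℕ) * ((Complex.log (deriv h z / deriv h z₀) +
        Complex.log (deriv h z₀)) / 2) = Complex.log (deriv h z / deriv h z₀) +
        Complex.log (deriv h z₀) := by push_cast; ring
    rw [e1, Complex.exp_add, Complex.exp_log (div_ne_zero (hd z hz) (hd z₀ hz₀)),
      Complex.exp_log (hd z₀ hz₀), div_mul_cancel₀ _ (hd z₀ hz₀)]

lemma wronskian_const_ball {u v g : ℂ → ℂ} {c : ℂ} {r : ℝ}
    (hu : ∀ z ∈ Metric.ball c r, AnalyticAt ℂ u z)
    (hv : ∀ z ∈ Metric.ball c r, AnalyticAt ℂ v z)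
    (hu'' : ∀ z ∈ Metric.ball c r, deriv (deriv u) z + (1/2) * g z * u z = 0)
    (hv'' : ∀ z ∈ Metric.ball c r, deriv (deriv v) z + (1/2) * g z * v z = 0) :
    ∀ z ∈ Metric.ball c r, u z * deriv v z - v z * deriv u z
      = u c * deriv v c - v c * deriv u c := by
  intro z hz
  refine const_on_ball (f := fun w => u w * deriv v w - v w * deriv u w)
    (fun w hw => ?_) (fun w hw => ?_) z hz
  · exact (((hu w hw).mul (hv w hw).deriv').sub ((hv w hw).mul (hu w hw).deriv')).differentiableAt
  · have Hu : HasDerivAt u (deriv u w) w := (hu w hw).differentiableAt.hasDerivAt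
    have Hv : HasDerivAt v (deriv v w) w := (hv w hw).differentiableAt.hasDerivAt
    have Hu' : HasDerivAt (deriv u) (deriv (deriv u) w) w :=
      (hu w hw).deriv'.differentiableAt.hasDerivAt
    have Hv' : HasDerivAt (deriv v) (deriv (deriv v) w) w :=
      (hv w hw).deriv'.differentiableAt.hasDerivAt
    have H : HasDerivAt (fun w => u w * deriv v w - v w * deriv u w)
        ((deriv u w * deriv v w + u w * deriv (deriv v) w) -
         (deriv v w * deriv u w + v w * deriv (deriv u) w)) w :=
      (Hu.mul Hv').sub (Hv.mul Hu')
    rw [H.deriv]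
    linear_combination u w * hv'' w hw - v w * hu'' w hw

lemma local_rep {h g y₁ y₂ : ℂ → ℂ} {z₀ : ℂ} {r : ℝ} {W : ℂ} (hWne : W ≠ 0)
    (hz₀ : z₀ ∈ Metric.ball z₀ r)
    (hB : ∀ z ∈ Metric.ball z₀ r, AnalyticAt ℂ h z)
    (hd : ∀ z ∈ Metric.ball z₀ r, deriv h z ≠ 0)
    (hslit : ∀ z ∈ Metric.ball z₀ r, deriv h z / deriv h z₀ ∈ slitPlane)
    (hy₁ : ∀ z ∈ Metric.ball z₀ r, AnalyticAt ℂ y₁ z)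
    (hy₂ : ∀ z ∈ Metric.ball z₀ r, AnalyticAt ℂ y₂ z)
    (hsol₁ : ∀ z ∈ Metric.ball z₀ r, deriv (deriv y₁) z + (1/2) * g z * y₁ z = 0)
    (hsol₂ : ∀ z ∈ Metric.ball z₀ r, deriv (deriv y₂) z + (1/2) * g z * y₂ z = 0)
    (hgs : ∀ z ∈ Metric.ball z₀ r, schwarzian h z = g z)
    (hW : ∀ z ∈ Metric.ball z₀ r, y₁ z * deriv y₂ z - y₂ z * deriv y₁ z = W) :
    ∃ a b c d : ℂ, (a * d - b * c) * W = -1 ∧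
      ∀ z ∈ Metric.ball z₀ r, h z * (c * y₁ z + d * y₂ z) = a * y₁ z + b * y₂ z := by
  obtain ⟨s, hs_an, r1⟩ := exists_sqrt_deriv hz₀ hB hd hslit
  have hs_ne : ∀ z ∈ Metric.ball z₀ r, s z ≠ 0 := by
    intro z hz h0
    exact hd z hz (by rw [← r1 z hz, h0]; ring)
  have Hs : ∀ z ∈ Metric.ball z₀ r, HasDerivAt s (deriv s z) z :=
    fun z hz => (hs_an z hz).differentiableAt.hasDerivAt
  have Hs' : ∀ z ∈ Metric.ball z₀ r, HasDerivAt (deriv s) (deriv (deriv s) z) z :=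
    fun z hz => (hs_an z hz).deriv'.differentiableAt.hasDerivAt
  have Hh : ∀ z ∈ Metric.ball z₀ r, HasDerivAt h (deriv h z) z :=
    fun z hz => (hB z hz).differentiableAt.hasDerivAt
  have Hh1 : ∀ z ∈ Metric.ball z₀ r, HasDerivAt (deriv h) (deriv (deriv h) z) z :=
    fun z hz => (hB z hz).deriv'.differentiableAt.hasDerivAt
  have Hh2 : ∀ z ∈ Metric.ball z₀ r,
      HasDerivAt (deriv (deriv h)) (deriv (deriv (deriv h)) z) z :=
    fun z hz => (hB z hz).deriv'.deriv'.differentiableAt.hasDerivAt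
  -- r2 : 2 s s' = h''
  have r2 : ∀ z ∈ Metric.ball z₀ r, 2 * s z * deriv s z = deriv (deriv h) z := by
    intro z hz
    have e := deriv_congr_ball r1 hz
    rw [((Hs z hz).fun_pow 2).deriv] at e
    rw [← e]
    norm_num
  -- r3 : 2 s'^2 + 2 s s'' = h'''
  have r3 : ∀ z ∈ Metric.ball z₀ r,
      2 * deriv s z * deriv s z + 2 * s z * deriv (deriv s) z
        = deriv (deriv (deriv h)) z := by
    intro z hz
    have e := deriv_congr_ball r2 hz
    rw [show deriv (fun w => 2 * s w * deriv s w) z = _ from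
      (((Hs z hz).const_mul 2).mul (Hs' z hz)).deriv] at e
    rw [← e]
  -- r4 : h''' h' = g h'^2 + (3/2) h''^2
  have r4 : ∀ z ∈ Metric.ball z₀ r,
      deriv (deriv (deriv h)) z * deriv h z
        = g z * deriv h z ^ 2 + (3/2) * deriv (deriv h) z ^ 2 := by
    intro z hz
    have hq : HasDerivAt (fun w => deriv (deriv h) w / deriv h w)
        ((deriv (deriv (deriv h)) z * deriv h z - deriv (deriv h) z * deriv (deriv h) z)
          / deriv h z ^ 2) z := (Hh2 z hz).div (Hh1 z hz) (hd z hz)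
    have e := hgs z hz
    unfold schwarzian at e
    rw [hq.deriv] at e
    have hdz := hd z hz
    field_simp at e
    have e7 : (deriv (deriv (deriv h)) z * deriv h z) * (2 * deriv h z ^ 2)
        = (g z * deriv h z ^ 2 + (3/2) * deriv (deriv h) z ^ 2) * (2 * deriv h z ^ 2) := by
      linear_combination (deriv h z ^ 2) * e
    exact mul_right_cancel₀ (mul_ne_zero two_ne_zero (pow_ne_zero 2 hdz)) e7
  -- key : 2 s s'' = g s^2 + 4 s'^2
  have key : ∀ z ∈ Metric.ball z₀ r,
      2 * s z * deriv (deriv s) z = g z * s z ^ 2 + 4 * deriv s z ^ 2 := by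
    intro z hz
    have hr1 := r1 z hz; have hr2 := r2 z hz; have hr3 := r3 z hz; have hr4 := r4 z hz
    have e5 : (2 * deriv s z * deriv s z + 2 * s z * deriv (deriv s) z) * s z ^ 2
        = (g z * s z ^ 2 + 6 * deriv s z ^ 2) * s z ^ 2 := by
      linear_combination (s z ^ 2) * hr3 +
        (deriv (deriv (deriv h)) z - g z * (s z ^ 2 + deriv h z)) * hr1 -
        (3/2) * (2 * s z * deriv s z + deriv (deriv h) z) * hr2 + hr4
    have e6 := mul_right_cancel₀ (pow_ne_zero 2 (hs_ne z hz)) e5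
    linear_combination e6
  -- the two local solutions
  set w₁ : ℂ → ℂ := fun z => h z * (s z)⁻¹ with hw₁def
  set w₂ : ℂ → ℂ := fun z => (s z)⁻¹ with hw₂def
  have hw₂an : ∀ z ∈ Metric.ball z₀ r, AnalyticAt ℂ w₂ z :=
    fun z hz => (hs_an z hz).inv (hs_ne z hz)
  have hw₁an : ∀ z ∈ Metric.ball z₀ r, AnalyticAt ℂ w₁ z :=
    fun z hz => (hB z hz).mul (hw₂an z hz)
  have dw₂ : ∀ z ∈ Metric.ball z₀ r, deriv w₂ z = -(deriv s z) / s z ^ 2 :=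
    fun z hz => ((Hs z hz).inv (hs_ne z hz)).deriv
  have dw₁ : ∀ z ∈ Metric.ball z₀ r,
      deriv w₁ z = deriv h z * (s z)⁻¹ + h z * (-(deriv s z) / s z ^ 2) :=
    fun z hz => ((Hh z hz).mul ((Hs z hz).inv (hs_ne z hz))).deriv
  have w₂'' : ∀ z ∈ Metric.ball z₀ r,
      deriv (deriv w₂) z + (1/2) * g z * w₂ z = 0 := by
    intro z hz
    have e := deriv_congr_ball dw₂ hz
    have H : HasDerivAt (fun w => -(deriv s w) / s w ^ 2)
        ((-(deriv (deriv s) z) * s z ^ 2 -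
          -(deriv s z) * ((2 : ℕ) * s z ^ (2 - 1) * deriv s z)) / (s z ^ 2) ^ 2) z :=
      ((Hs' z hz).neg).div ((Hs z hz).pow 2) (pow_ne_zero 2 (hs_ne z hz))
    rw [e, H.deriv]
    have hk := key z hz
    have hsz := hs_ne z hz
    show (-(deriv (deriv s) z) * s z ^ 2 -
          -(deriv s z) * ((2 : ℕ) * s z ^ (2 - 1) * deriv s z)) / (s z ^ 2) ^ 2
        + 1/2 * g z * (s z)⁻¹ = 0
    field_simp
    linear_combination (-(s z)) * hk
  have w₁'' : ∀ z ∈ Metric.ball z₀ r,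
      deriv (deriv w₁) z + (1/2) * g z * w₁ z = 0 := by
    intro z hz
    have e := deriv_congr_ball dw₁ hz
    have H : HasDerivAt
        (fun w => deriv h w * (s w)⁻¹ + h w * (-(deriv s w) / s w ^ 2))
        ((deriv (deriv h) z * (s z)⁻¹ + deriv h z * (-(deriv s z) / s z ^ 2)) +
         (deriv h z * (-(deriv s z) / s z ^ 2) + h z *
           ((-(deriv (deriv s) z) * s z ^ 2 -
             -(deriv s z) * ((2 : ℕ) * s z ^ (2 - 1) * deriv s z)) / (s z ^ 2) ^ 2))) z :=
      ((Hh1 z hz).mul ((Hs z hz).inv (hs_ne z hz))).add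
        ((Hh z hz).mul (((Hs' z hz).neg).div ((Hs z hz).pow 2)
          (pow_ne_zero 2 (hs_ne z hz))))
    rw [e, H.deriv]
    have hk := key z hz
    have hr1 := r1 z hz
    have hr2 := r2 z hz
    have hsz := hs_ne z hz
    show (deriv (deriv h) z * (s z)⁻¹ + deriv h z * (-(deriv s z) / s z ^ 2)) +
         (deriv h z * (-(deriv s z) / s z ^ 2) + h z *
           ((-(deriv (deriv s) z) * s z ^ 2 -
             -(deriv s z) * ((2 : ℕ) * s z ^ (2 - 1) * deriv s z)) / (s z ^ 2) ^ 2))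
        + 1/2 * g z * (h z * (s z)⁻¹) = 0
    field_simp
    linear_combination (-(s z) * h z) * hk - 2 * s z ^ 3 * hr2 +
      4 * s z ^ 2 * deriv s z * hr1
  -- Wronskians of w_i with y_j are constant on the ball
  have A1 := wronskian_const_ball hw₁an hy₁ w₁'' hsol₁
  have A2 := wronskian_const_ball hw₁an hy₂ w₁'' hsol₂
  have C1 := wronskian_const_ball hw₂an hy₁ w₂'' hsol₁
  have C2 := wronskian_const_ball hw₂an hy₂ w₂'' hsol₂
  -- Wronskian of w₁, w₂ at z₀ is -1
  have hww : w₁ z₀ * deriv w₂ z₀ - w₂ z₀ * deriv w₁ z₀ = -1 := by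
    rw [dw₁ z₀ hz₀, dw₂ z₀ hz₀]
    have hr1 := r1 z₀ hz₀
    have hsz := hs_ne z₀ hz₀
    have hdz := hd z₀ hz₀
    show h z₀ * (s z₀)⁻¹ * (-(deriv s z₀) / s z₀ ^ 2) -
      (s z₀)⁻¹ * (deriv h z₀ * (s z₀)⁻¹ + h z₀ * (-(deriv s z₀) / s z₀ ^ 2)) = -1
    field_simp [hsz]
    linear_combination s z₀ * hr1
  have e3₀ := hW z₀ hz₀
  have hdet : (w₁ z₀ * deriv y₁ z₀ - y₁ z₀ * deriv w₁ z₀) *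
        (w₂ z₀ * deriv y₂ z₀ - y₂ z₀ * deriv w₂ z₀) -
      (w₁ z₀ * deriv y₂ z₀ - y₂ z₀ * deriv w₁ z₀) *
        (w₂ z₀ * deriv y₁ z₀ - y₁ z₀ * deriv w₂ z₀) = -W := by
    linear_combination (y₁ z₀ * deriv y₂ z₀ - y₂ z₀ * deriv y₁ z₀) * hww - e3₀
  refine ⟨(w₁ z₀ * deriv y₂ z₀ - y₂ z₀ * deriv w₁ z₀) / W,
    -(w₁ z₀ * deriv y₁ z₀ - y₁ z₀ * deriv w₁ z₀) / W,
    (w₂ z₀ * deriv y₂ z₀ - y₂ z₀ * deriv w₂ z₀) / W,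
    -(w₂ z₀ * deriv y₁ z₀ - y₁ z₀ * deriv w₂ z₀) / W, ?_, ?_⟩
  · have expand : ((w₁ z₀ * deriv y₂ z₀ - y₂ z₀ * deriv w₁ z₀) / W *
        (-(w₂ z₀ * deriv y₁ z₀ - y₁ z₀ * deriv w₂ z₀) / W) -
        -(w₁ z₀ * deriv y₁ z₀ - y₁ z₀ * deriv w₁ z₀) / W *
        ((w₂ z₀ * deriv y₂ z₀ - y₂ z₀ * deriv w₂ z₀) / W)) * W
        = ((w₁ z₀ * deriv y₁ z₀ - y₁ z₀ * deriv w₁ z₀) *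
            (w₂ z₀ * deriv y₂ z₀ - y₂ z₀ * deriv w₂ z₀) -
          (w₁ z₀ * deriv y₂ z₀ - y₂ z₀ * deriv w₁ z₀) *
            (w₂ z₀ * deriv y₁ z₀ - y₁ z₀ * deriv w₂ z₀)) * W / W ^ 2 := by
      ring
    rw [expand, hdet]
    rw [neg_mul, neg_div, neg_eq_iff_eq_neg, neg_neg, pow_two,
      div_self (mul_ne_zero hWne hWne)]
  · intro z hz
    have e1 := A2 z hz
    have e2 := A1 z hz
    have f1 := C2 z hz
    have f2 := C1 z hz
    have e3 := hW z hz
    have hw : h z * w₂ z = w₁ z := rfl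
    have rep1 : w₁ z * W = y₁ z * (w₁ z₀ * deriv y₂ z₀ - y₂ z₀ * deriv w₁ z₀)
        - y₂ z * (w₁ z₀ * deriv y₁ z₀ - y₁ z₀ * deriv w₁ z₀) := by
      linear_combination y₁ z * e1 - y₂ z * e2 - w₁ z * e3
    have rep2 : w₂ z * W = y₁ z * (w₂ z₀ * deriv y₂ z₀ - y₂ z₀ * deriv w₂ z₀)
        - y₂ z * (w₂ z₀ * deriv y₁ z₀ - y₁ z₀ * deriv w₂ z₀) := by
      linear_combination y₁ z * f1 - y₂ z * f2 - w₂ z * e3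
    have eL : (w₂ z₀ * deriv y₂ z₀ - y₂ z₀ * deriv w₂ z₀) / W * y₁ z +
        -(w₂ z₀ * deriv y₁ z₀ - y₁ z₀ * deriv w₂ z₀) / W * y₂ z = w₂ z := by
      rw [show (w₂ z₀ * deriv y₂ z₀ - y₂ z₀ * deriv w₂ z₀) / W * y₁ z +
          -(w₂ z₀ * deriv y₁ z₀ - y₁ z₀ * deriv w₂ z₀) / W * y₂ z
          = (y₁ z * (w₂ z₀ * deriv y₂ z₀ - y₂ z₀ * deriv w₂ z₀) -
             y₂ z * (w₂ z₀ * deriv y₁ z₀ - y₁ z₀ * deriv w₂ z₀)) / W from by ring,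
        ← rep2, mul_div_cancel_right₀ _ hWne]
    have eR : (w₁ z₀ * deriv y₂ z₀ - y₂ z₀ * deriv w₁ z₀) / W * y₁ z +
        -(w₁ z₀ * deriv y₁ z₀ - y₁ z₀ * deriv w₁ z₀) / W * y₂ z = w₁ z := by
      rw [show (w₁ z₀ * deriv y₂ z₀ - y₂ z₀ * deriv w₁ z₀) / W * y₁ z +
          -(w₁ z₀ * deriv y₁ z₀ - y₁ z₀ * deriv w₁ z₀) / W * y₂ z
          = (y₁ z * (w₁ z₀ * deriv y₂ z₀ - y₂ z₀ * deriv w₁ z₀) -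
             y₂ z * (w₁ z₀ * deriv y₁ z₀ - y₁ z₀ * deriv w₁ z₀)) / W from by ring,
        ← rep1, mul_div_cancel_right₀ _ hWne]
    rw [eL, eR]


/-- Remark after Proposition 2.2. Let `D` be a simply connected
domain, `g` holomorphic on `D`, and `h` a non-constant meromorphic function on `D` with
`{h, z} = g`. If `y₁, y₂` are two linearly independent holomorphic solutions of
`y'' + (1/2) g y = 0` on `D`, then there is `α = [[a,b],[c,d]] ∈ GL(2,ℂ)` with
`h = (a (y₁/y₂) + b) / (c (y₁/y₂) + d)`; in particular, with
`(f₁, f₂) = (a y₁ + b y₂, c y₁ + d y₂)` one has `h = f₁ / f₂`, and `f₁, f₂` are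
holomorphic solutions of `y'' + (1/2) g y = 0`. -/
theorem eq_moebius_of_ratio_of_solutions
    (D : Set ℂ) (hD : IsOpen D) (hDconn : IsConnected D) (hDsc : SimplyConnectedSpace D)
    (h g : ℂ → ℂ) (hmer : MeromorphicOn h D) (hnc : NonconstOn h D)
    (hg : AnalyticOnNhd ℂ g D)
    (hgs : ∀ z ∈ D, AnalyticAt ℂ h z → deriv h z ≠ 0 → schwarzian h z = g z)
    (y₁ y₂ : ℂ → ℂ) (hy₁ : AnalyticOnNhd ℂ y₁ D) (hy₂ : AnalyticOnNhd ℂ y₂ D)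
    (hsol₁ : ∀ z ∈ D, deriv (deriv y₁) z + (1 / 2) * g z * y₁ z = 0)
    (hsol₂ : ∀ z ∈ D, deriv (deriv y₂) z + (1 / 2) * g z * y₂ z = 0)
    (hind : ∀ a b : ℂ, (∀ z ∈ D, a * y₁ z + b * y₂ z = 0) → a = 0 ∧ b = 0) :
    ∃ a b c d : ℂ, a * d - b * c ≠ 0 ∧
      (∀ z ∈ D, AnalyticAt ℂ h z → y₂ z ≠ 0 → c * (y₁ z / y₂ z) + d ≠ 0 →
        h z = (a * (y₁ z / y₂ z) + b) / (c * (y₁ z / y₂ z) + d)) ∧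
      (∀ z ∈ D, AnalyticAt ℂ h z → c * y₁ z + d * y₂ z ≠ 0 →
        h z = (a * y₁ z + b * y₂ z) / (c * y₁ z + d * y₂ z)) ∧
      (∀ z ∈ D, deriv (deriv (fun w => a * y₁ w + b * y₂ w)) z +
        (1 / 2) * g z * (a * y₁ z + b * y₂ z) = 0) ∧
      (∀ z ∈ D, deriv (deriv (fun w => c * y₁ w + d * y₂ w)) z +
        (1 / 2) * g z * (c * y₁ z + d * y₂ z) = 0) := by
  have hDpre : IsPreconnected D := hDconn.isPreconnected
  -- the general linear-combination-of-solutions fact (bullets 4 and 5)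
  have lin : ∀ u v : ℂ, ∀ z ∈ D, deriv (deriv (fun w => u * y₁ w + v * y₂ w)) z +
      (1 / 2) * g z * (u * y₁ z + v * y₂ z) = 0 := by
    intro u v z hz
    have hD1 : ∀ w ∈ D, deriv (fun w => u * y₁ w + v * y₂ w) w
        = u * deriv y₁ w + v * deriv y₂ w := fun w hw =>
      (((hy₁ w hw).differentiableAt.hasDerivAt.const_mul u).add
        ((hy₂ w hw).differentiableAt.hasDerivAt.const_mul v)).deriv
    have e : deriv (deriv (fun w => u * y₁ w + v * y₂ w)) z
        = deriv (fun w => u * deriv y₁ w + v * deriv y₂ w) z :=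
      Filter.EventuallyEq.deriv_eq
        (by filter_upwards [hD.eventually_mem hz] with w hw using hD1 w hw)
    rw [e, show deriv (fun w => u * deriv y₁ w + v * deriv y₂ w) z = _ from
      (((hy₁ z hz).deriv'.differentiableAt.hasDerivAt.const_mul u).add
      ((hy₂ z hz).deriv'.differentiableAt.hasDerivAt.const_mul v)).deriv]
    linear_combination u * hsol₁ z hz + v * hsol₂ z hz
  -- the Wronskian of y₁, y₂ is constant on D
  have hWan : AnalyticOnNhd ℂ (fun z => y₁ z * deriv y₂ z - y₂ z * deriv y₁ z) D :=
    fun z hz => ((hy₁ z hz).mul (hy₂ z hz).deriv').sub ((hy₂ z hz).mul (hy₁ z hz).deriv')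
  have hWd : ∀ z ∈ D, deriv (fun z => y₁ z * deriv y₂ z - y₂ z * deriv y₁ z) z = 0 := by
    intro z hz
    have H : HasDerivAt (fun w => y₁ w * deriv y₂ w - y₂ w * deriv y₁ w)
        ((deriv y₁ z * deriv y₂ z + y₁ z * deriv (deriv y₂) z) -
         (deriv y₂ z * deriv y₁ z + y₂ z * deriv (deriv y₁) z)) z :=
      ((hy₁ z hz).differentiableAt.hasDerivAt.mul
        (hy₂ z hz).deriv'.differentiableAt.hasDerivAt).sub
      ((hy₂ z hz).differentiableAt.hasDerivAt.mul
        (hy₁ z hz).deriv'.differentiableAt.hasDerivAt)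
    rw [H.deriv]
    linear_combination y₁ z * hsol₂ z hz - y₂ z * hsol₁ z hz
  obtain ⟨p₀, hp₀⟩ := hDconn.nonempty
  have hWconst := const_of_deriv_zero hD hDpre hWan hWd hp₀
  -- the Wronskian is nonzero
  have hWne : y₁ p₀ * deriv y₂ p₀ - y₂ p₀ * deriv y₁ p₀ ≠ 0 := by
    intro h0
    have hy₂ne : ∃ q ∈ D, y₂ q ≠ 0 := by
      by_contra hq; push_neg at hq
      exact one_ne_zero (hind 0 1 (fun z hz => by rw [hq z hz]; ring)).2
    obtain ⟨q, hqD, hq2⟩ := hy₂ne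
    have hev : ∀ᶠ z in 𝓝 q, y₂ z ≠ 0 ∧ z ∈ D :=
      ((hy₂ q hqD).continuousAt.eventually_ne hq2).and (hD.eventually_mem hqD)
    obtain ⟨ρ, hρ, hball⟩ := Metric.eventually_nhds_iff_ball.mp hev
    have hq_const : ∀ z ∈ Metric.ball q ρ, y₁ z / y₂ z = y₁ q / y₂ q := by
      refine const_on_ball (fun z hz => ?_) (fun z hz => ?_)
      · exact ((hy₁ z (hball z hz).2).differentiableAt.div
          (hy₂ z (hball z hz).2).differentiableAt (hball z hz).1)
      · have H : HasDerivAt (fun w => y₁ w / y₂ w)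
            ((deriv y₁ z * y₂ z - y₁ z * deriv y₂ z) / y₂ z ^ 2) z :=
          (hy₁ z (hball z hz).2).differentiableAt.hasDerivAt.div
            (hy₂ z (hball z hz).2).differentiableAt.hasDerivAt (hball z hz).1
        rw [H.deriv]
        have hWz : y₁ z * deriv y₂ z - y₂ z * deriv y₁ z = 0 :=
          (hWconst z (hball z hz).2).trans h0
        rw [show deriv y₁ z * y₂ z - y₁ z * deriv y₂ z = 0 from by linear_combination -hWz,
          zero_div]
    have hzero : ∀ z ∈ Metric.ball q ρ, y₁ z - (y₁ q / y₂ q) * y₂ z = 0 := by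
      intro z hz
      have e := hq_const z hz
      rw [div_eq_div_iff (hball z hz).1 hq2] at e
      field_simp [hq2]
      linear_combination e
    have hana : AnalyticOnNhd ℂ (fun z => y₁ z - (y₁ q / y₂ q) * y₂ z) D :=
      fun z hz => (hy₁ z hz).sub (analyticAt_const.mul (hy₂ z hz))
    have hallD : ∀ z ∈ D, y₁ z - (y₁ q / y₂ q) * y₂ z = 0 := by
      have hfreq : (fun z => y₁ z - (y₁ q / y₂ q) * y₂ z) =ᶠ[𝓝 q] 0 := by
        filter_upwards [Metric.ball_mem_nhds q hρ] using hzero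
      exact fun z hz =>
        hana.eqOn_zero_of_preconnected_of_eventuallyEq_zero hDpre hqD hfreq hz
    exact one_ne_zero
      (hind 1 (-(y₁ q / y₂ q)) (fun z hz => by linear_combination hallD z hz)).1
  -- find a point where h is analytic with nonvanishing derivative
  have hz₁ex : ∃ z₁ ∈ D, AnalyticAt ℂ h z₁ := by
    have h1 := (hmer p₀ hp₀).eventually_analyticAt
    have h2 : ∀ᶠ z in 𝓝[≠] p₀, z ∈ D :=
      (hD.eventually_mem hp₀).filter_mono nhdsWithin_le_nhds
    obtain ⟨z₁, h3, h4⟩ := (h1.and h2).exists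
    exact ⟨z₁, h4, h3⟩
  have hz₀ex : ∃ z₀ ∈ D, AnalyticAt ℂ h z₀ ∧ deriv h z₀ ≠ 0 := by
    by_contra hcon; push_neg at hcon
    obtain ⟨z₁, hz₁D, hz₁an⟩ := hz₁ex
    have hev : ∀ᶠ z in 𝓝 z₁, AnalyticAt ℂ h z ∧ z ∈ D :=
      hz₁an.eventually_analyticAt.and (hD.eventually_mem hz₁D)
    obtain ⟨ρ, hρ, hball⟩ := Metric.eventually_nhds_iff_ball.mp hev
    have hconst : ∀ z ∈ Metric.ball z₁ ρ, h z = h z₁ :=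
      const_on_ball (fun z hz => (hball z hz).1.differentiableAt)
        (fun z hz => hcon z (hball z hz).2 (hball z hz).1)
    have hmer2 : MeromorphicOn (fun z => h z - h z₁) D :=
      fun z hz => (hmer z hz).sub (MeromorphicAt.const _ z)
    have hspread := merom_spread hDpre hmer2 hz₁D
      (by filter_upwards [Metric.ball_mem_nhds z₁ hρ] with z hz; rw [hconst z hz]; ring)
    apply hnc
    refine ⟨h z₁, fun z hz hzan => ?_⟩
    have := eq_zero_of_eventually_punctured (f := fun w => h w - h z₁)
      (hzan.continuousAt.sub continuousAt_const) (hspread z hz)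
    linear_combination this
  obtain ⟨z₀, hz₀D, hz₀an, hz₀d⟩ := hz₀ex
  -- choose a ball where everything is nice
  have hev : ∀ᶠ z in 𝓝 z₀, (AnalyticAt ℂ h z ∧ z ∈ D) ∧ deriv h z ≠ 0 ∧
      deriv h z / deriv h z₀ ∈ slitPlane := by
    have e1 := hz₀an.eventually_analyticAt
    have e2 := hD.eventually_mem hz₀D
    have e3 := hz₀an.deriv'.continuousAt.eventually_ne hz₀d
    have e4 : ∀ᶠ z in 𝓝 z₀, deriv h z / deriv h z₀ ∈ slitPlane := by
      have hc : ContinuousAt (fun z => deriv h z / deriv h z₀) z₀ :=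
        hz₀an.deriv'.continuousAt.div continuousAt_const hz₀d
      exact hc.eventually_mem (isOpen_slitPlane.mem_nhds
        (by rw [div_self hz₀d]; exact one_mem_slitPlane))
    filter_upwards [e1, e2, e3, e4] with z q1 q2 q3 q4 using ⟨⟨q1, q2⟩, q3, q4⟩
  obtain ⟨r, hr, hball⟩ := Metric.eventually_nhds_iff_ball.mp hev
  have hz₀B : z₀ ∈ Metric.ball z₀ r := Metric.mem_ball_self hr
  obtain ⟨a, b, c, d, hdet, hloc⟩ := local_rep (W := y₁ p₀ * deriv y₂ p₀ - y₂ p₀ * deriv y₁ p₀)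
    hWne hz₀B (fun z hz => (hball z hz).1.1) (fun z hz => (hball z hz).2.1)
    (fun z hz => (hball z hz).2.2) (fun z hz => hy₁ z (hball z hz).1.2)
    (fun z hz => hy₂ z (hball z hz).1.2) (fun z hz => hsol₁ z (hball z hz).1.2)
    (fun z hz => hsol₂ z (hball z hz).1.2)
    (fun z hz => hgs z (hball z hz).1.2 (hball z hz).1.1 (hball z hz).2.1)
    (fun z hz => hWconst z (hball z hz).1.2)
  -- globalize the identity h * (c y₁ + d y₂) = a y₁ + b y₂
  have hFmer : MeromorphicOn
      (fun w => h w * (c * y₁ w + d * y₂ w) - (a * y₁ w + b * y₂ w)) D := by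
    intro z hz
    exact ((hmer z hz).mul ((analyticAt_const.mul (hy₁ z hz)).add
        (analyticAt_const.mul (hy₂ z hz))).meromorphicAt).sub
      ((analyticAt_const.mul (hy₁ z hz)).add
        (analyticAt_const.mul (hy₂ z hz))).meromorphicAt
  have hF0 : ∀ᶠ w in 𝓝 z₀,
      h w * (c * y₁ w + d * y₂ w) - (a * y₁ w + b * y₂ w) = 0 := by
    filter_upwards [Metric.ball_mem_nhds z₀ hr] with z hz
    linear_combination hloc z hz
  have hFspread := merom_spread hDpre hFmer hz₀D hF0
  have key3 : ∀ z ∈ D, AnalyticAt ℂ h z → c * y₁ z + d * y₂ z ≠ 0 →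
      h z = (a * y₁ z + b * y₂ z) / (c * y₁ z + d * y₂ z) := by
    intro z hz hzan hden
    have hcont : ContinuousAt
        (fun w => h w * (c * y₁ w + d * y₂ w) - (a * y₁ w + b * y₂ w)) z := by
      apply ContinuousAt.sub
      · exact hzan.continuousAt.mul
          (((hy₁ z hz).continuousAt.const_smul c).add
            ((hy₂ z hz).continuousAt.const_smul d))
      · exact ((hy₁ z hz).continuousAt.const_smul a).add
          ((hy₂ z hz).continuousAt.const_smul b)
    have hFz := eq_zero_of_eventually_punctured hcont (hFspread z hz)
    rw [eq_div_iff hden]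
    linear_combination hFz
  refine ⟨a, b, c, d, ?_, ?_, key3, fun z hz => lin a b z hz, fun z hz => lin c d z hz⟩
  · intro h0
    rw [h0, zero_mul] at hdet
    exact absurd hdet (by norm_num)
  · intro z hz hzan hy2 hden
    have hnum : (a * (y₁ z / y₂ z) + b) * y₂ z = a * y₁ z + b * y₂ z := by
      field_simp
    have hden2 : (c * (y₁ z / y₂ z) + d) * y₂ z = c * y₁ z + d * y₂ z := by
      field_simp
    have hden' : c * y₁ z + d * y₂ z ≠ 0 := by
      rw [← hden2]
      exact mul_ne_zero hden hy2
    rw [key3 z hz hzan hden', ← hnum, ← hden2,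
      mul_div_mul_right _ _ hy2]
end
end
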